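/- Let 0 < α < 1, let F : [0, ∞) → ℝ be continuously differentiable with F(0) ≥ 0, F(u) > 0 and F′(u) ≥ 0 for all u ≥ 0, and let u : [0, T] → [0, ∞) solve the ordinary differential equation u′(t) = F(u(t)) with u(0) = u₀ ≥ 0. Then the function v(t) = u(t^{α}/Γ(α+1)) is a lower solution of the Caputo fractional differential equation ᶜD_{0|t}^{α}w = F(w), w(0) = u₀; that is, (ᶜD_{0|t}^{α}v)(t) ≤ F(v(t)) for all t in the interval where v is defined, and v(0) ≤ u₀. -/

import Mathlib

noncomputable section
open MeasureTheory Set intervalIntegral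

lemma caputo_key {α : ℝ} {x : ℝ} (hx : x ∈ Set.Icc (0:ℝ) 1) :
    ((x ^ (α - 1) * (1 - x) ^ (-α) : ℝ) : ℂ) =
      (x : ℂ) ^ ((α : ℂ) - 1) * (1 - (x : ℂ)) ^ (((1 - α : ℝ) : ℂ) - 1) := by
  have he : (((1 - α : ℝ) : ℂ)) - 1 = ((-α : ℝ) : ℂ) := by push_cast; ring
  rw [he, Complex.ofReal_mul, Complex.ofReal_cpow hx.1, Complex.ofReal_cpow (sub_nonneg.mpr hx.2)]
  push_cast
  ring_nf

lemma caputo_beta01_integrable {α : ℝ} (hα : 0 < α) (hα' : α < 1) :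
    IntervalIntegrable (fun x : ℝ => x ^ (α - 1) * (1 - x) ^ (-α)) volume 0 1 := by
  have hc := Complex.betaIntegral_convergent (u := (α : ℂ)) (v := ((1 - α : ℝ) : ℂ))
    (by simpa using hα) (by simpa using sub_pos.mpr hα')
  have h2 : IntervalIntegrable (fun x : ℝ => ((x ^ (α - 1) * (1 - x) ^ (-α) : ℝ) : ℂ))
      volume 0 1 := by
    apply hc.congr_ae
    refine (ae_restrict_iff' measurableSet_uIoc).mpr (Filter.Eventually.of_forall ?_)
    intro x hx
    rw [Set.uIoc_of_le zero_le_one] at hx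
    exact (caputo_key ⟨hx.1.le, hx.2⟩).symm
  constructor
  · simpa [IntegrableOn] using h2.1.re
  · simpa [IntegrableOn] using h2.2.re

lemma caputo_beta01_value {α : ℝ} (hα : 0 < α) (hα' : α < 1) :
    ∫ x in (0:ℝ)..1, x ^ (α - 1) * (1 - x) ^ (-α) = Real.Gamma α * Real.Gamma (1 - α) := by
  have h := Complex.Gamma_mul_Gamma_eq_betaIntegral (s := (α : ℂ)) (t := ((1 - α : ℝ) : ℂ))
    (by simpa using hα) (by simpa using sub_pos.mpr hα')
  have hsum : (α : ℂ) + ((1 - α : ℝ) : ℂ) = 1 := by push_cast; ring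
  rw [hsum, Complex.Gamma_one, one_mul, Complex.betaIntegral] at h
  have hI : (∫ x in (0:ℝ)..1, (x : ℂ) ^ ((α : ℂ) - 1) * (1 - (x : ℂ)) ^ (((1 - α : ℝ) : ℂ) - 1))
      = ((∫ x in (0:ℝ)..1, x ^ (α - 1) * (1 - x) ^ (-α) : ℝ) : ℂ) := by
    rw [← intervalIntegral.integral_ofReal]
    apply intervalIntegral.integral_congr
    intro x hx
    rw [Set.uIcc_of_le zero_le_one] at hx
    exact (caputo_key hx).symm
  rw [hI, Complex.Gamma_ofReal, Complex.Gamma_ofReal, ← Complex.ofReal_mul] at h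
  exact_mod_cast h.symm

lemma caputo_betaT_integrable {α t : ℝ} (hα : 0 < α) (hα' : α < 1) (ht : 0 < t) :
    IntervalIntegrable (fun s : ℝ => s ^ (α - 1) * (t - s) ^ (-α)) volume 0 t := by
  have h := (caputo_beta01_integrable hα hα').comp_mul_right (c := t⁻¹)
  simp only [zero_div, one_div, inv_inv] at h
  have h2 := h.const_mul t⁻¹
  apply h2.congr_ae
  refine (ae_restrict_iff' measurableSet_uIoc).mpr (Filter.Eventually.of_forall ?_)
  intro s hs
  rw [Set.uIoc_of_le ht.le] at hs
  have hs0 : (0:ℝ) ≤ s := hs.1.le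
  have hst : s ≤ t := hs.2
  have h1x : (0:ℝ) ≤ 1 - s * t⁻¹ := by
    rw [sub_nonneg]
    calc s * t⁻¹ ≤ t * t⁻¹ := by gcongr
    _ = 1 := mul_inv_cancel₀ ht.ne'
  show t⁻¹ * ((s * t⁻¹) ^ (α - 1) * (1 - s * t⁻¹) ^ (-α)) = s ^ (α - 1) * (t - s) ^ (-α)
  rw [Real.mul_rpow hs0 (by positivity)]
  have : (1 : ℝ) - s * t⁻¹ = (t - s) * t⁻¹ := by field_simp
  rw [this, Real.mul_rpow (by linarith) (by positivity)]
  have hne : t⁻¹ ≠ 0 := by positivity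
  have hrw : t⁻¹ * ((t:ℝ)⁻¹ ^ (α - 1) * t⁻¹ ^ (-α)) = 1 := by
    rw [← Real.rpow_add (by positivity : (0:ℝ) < t⁻¹)]
    have he : α - 1 + -α = -1 := by ring
    rw [he, Real.rpow_neg_one, inv_inv, inv_mul_cancel₀ ht.ne']
  calc t⁻¹ * (s ^ (α - 1) * t⁻¹ ^ (α - 1) * ((t - s) ^ (-α) * t⁻¹ ^ (-α)))
      = (t⁻¹ * (t⁻¹ ^ (α - 1) * t⁻¹ ^ (-α))) * (s ^ (α - 1) * (t - s) ^ (-α)) := by ring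
    _ = s ^ (α - 1) * (t - s) ^ (-α) := by rw [hrw, one_mul]

lemma caputo_betaT_value {α t : ℝ} (hα : 0 < α) (hα' : α < 1) (ht : 0 < t) :
    ∫ s in (0:ℝ)..t, s ^ (α - 1) * (t - s) ^ (-α) = Real.Gamma α * Real.Gamma (1 - α) := by
  have h := intervalIntegral.integral_comp_mul_right
    (f := fun s : ℝ => s ^ (α - 1) * (t - s) ^ (-α)) (a := 0) (b := 1) ht.ne'
  rw [zero_mul, one_mul] at h
  have h2 : ∫ x in (0:ℝ)..1, (x * t) ^ (α - 1) * (t - x * t) ^ (-α)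
      = ∫ x in (0:ℝ)..1, t⁻¹ * (x ^ (α - 1) * (1 - x) ^ (-α)) := by
    apply intervalIntegral.integral_congr
    intro x hx
    rw [Set.uIcc_of_le zero_le_one] at hx
    have hx0 := hx.1
    have hx1 := hx.2
    show (x * t) ^ (α - 1) * (t - x * t) ^ (-α) = t⁻¹ * (x ^ (α - 1) * (1 - x) ^ (-α))
    rw [Real.mul_rpow hx0 ht.le]
    have : t - x * t = (1 - x) * t := by ring
    rw [this, Real.mul_rpow (by linarith) ht.le]
    have hrw : t ^ (α - 1) * t ^ (-α) = t⁻¹ := by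
      rw [← Real.rpow_add ht]
      have he : α - 1 + -α = -1 := by ring
      rw [he, Real.rpow_neg_one]
    calc x ^ (α - 1) * t ^ (α - 1) * ((1 - x) ^ (-α) * t ^ (-α))
        = (t ^ (α - 1) * t ^ (-α)) * (x ^ (α - 1) * (1 - x) ^ (-α)) := by ring
      _ = t⁻¹ * (x ^ (α - 1) * (1 - x) ^ (-α)) := by rw [hrw]
  simp only [smul_eq_mul] at h
  rw [h2, intervalIntegral.integral_const_mul, caputo_beta01_value hα hα'] at h
  exact (mul_left_cancel₀ (inv_ne_zero ht.ne') h).symm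

/-- Left Caputo fractional derivative
`(ᶜD_{0|t}^{α}ψ)(t) = (1/Γ(1−α)) ∫_0^t (t−s)^{−α} ψ′(s) ds`. -/
def leftCaputo (α : ℝ) (ψ : ℝ → ℝ) (t : ℝ) : ℝ :=
  (1 / Real.Gamma (1 - α)) * ∫ s in (0:ℝ)..t, (t - s) ^ (-α) * deriv ψ s

/-- If `u` solves the ODE `u′ = F(u)`, `u(0) = u₀`, with `F(0) ≥ 0`, `F > 0` and
`F′ ≥ 0` on `[0,∞)`, then `v(t) = u(t^α/Γ(α+1))` is a lower solution of the Caputo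
fractional equation `ᶜD_{0|t}^{α}w = F(w)`, `w(0) = u₀`:
`(ᶜD_{0|t}^{α}v)(t) ≤ F(v(t))` where `v` is defined, and `v(0) ≤ u₀`. -/
theorem caputo_lower_solution
    (α : ℝ) (hα : 0 < α) (hα' : α < 1)
    (F : ℝ → ℝ) (hF : ContDiff ℝ 1 F)
    (hF0 : 0 ≤ F 0) (hFpos : ∀ w : ℝ, 0 ≤ w → 0 < F w)
    (hF' : ∀ w : ℝ, 0 ≤ w → 0 ≤ deriv F w)
    (T : ℝ) (hT : 0 < T) (u₀ : ℝ) (hu₀ : 0 ≤ u₀)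
    (u : ℝ → ℝ) (hu : ∀ t ∈ Set.Icc (0:ℝ) T, HasDerivAt u (F (u t)) t)
    (hu0 : u 0 = u₀) (hunn : ∀ t ∈ Set.Icc (0:ℝ) T, 0 ≤ u t) :
    u ((0:ℝ) ^ α / Real.Gamma (α + 1)) ≤ u₀ ∧
    ∀ t : ℝ, 0 ≤ t → t ^ α / Real.Gamma (α + 1) ≤ T →
      leftCaputo α (fun s => u (s ^ α / Real.Gamma (α + 1))) t ≤
        F (u (t ^ α / Real.Gamma (α + 1))) := by
  have hc : 0 < Real.Gamma (α + 1) := Real.Gamma_pos_of_pos (by linarith)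
  have hΓα : 0 < Real.Gamma α := Real.Gamma_pos_of_pos hα
  have hΓ1α : 0 < Real.Gamma (1 - α) := Real.Gamma_pos_of_pos (by linarith)
  set c := Real.Gamma (α + 1) with hcdef
  constructor
  · rw [Real.zero_rpow hα.ne', zero_div, hu0]
  intro t ht0 htT
  rcases ht0.eq_or_lt with rfl | ht
  · rw [leftCaputo, intervalIntegral.integral_same, mul_zero]
    rw [Real.zero_rpow hα.ne', zero_div, hu0]
    exact (hFpos u₀ hu₀).le
  -- now 0 < t
  have hgmem : ∀ s ∈ Set.Icc (0:ℝ) t, s ^ α / c ∈ Set.Icc (0:ℝ) T := by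
    intro s hs
    refine ⟨div_nonneg (Real.rpow_nonneg hs.1 α) hc.le, le_trans ?_ htT⟩
    gcongr
    · exact hs.1
    · exact hs.2
  have hucont : ContinuousOn u (Set.Icc 0 T) := fun x hx =>
    (hu x hx).continuousAt.continuousWithinAt
  have humono : MonotoneOn u (Set.Icc 0 T) := by
    refine (strictMonoOn_of_deriv_pos (convex_Icc 0 T) hucont ?_).monotoneOn
    intro x hx
    rw [(hu x (interior_subset hx)).deriv]
    exact hFpos _ (hunn x (interior_subset hx))
  have hFmono : MonotoneOn F (Set.Ici 0) := by
    refine monotoneOn_of_deriv_nonneg (convex_Ici 0) hF.continuous.continuousOn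
      ((hF.differentiable one_ne_zero).differentiableOn) ?_
    intro x hx
    rw [interior_Ici] at hx
    exact hF' x hx.le
  -- derivative of v
  have hderiv : ∀ s ∈ Set.Ioc (0:ℝ) t,
      deriv (fun s => u (s ^ α / c)) s = F (u (s ^ α / c)) * (α * s ^ (α - 1) / c) := by
    intro s hs
    have h1 : HasDerivAt (fun s : ℝ => s ^ α / c) (α * s ^ (α - 1) / c) s :=
      (Real.hasDerivAt_rpow_const (Or.inl hs.1.ne')).div_const c
    have h2 : HasDerivAt u (F (u (s ^ α / c))) (s ^ α / c) :=
      hu _ (hgmem s ⟨hs.1.le, hs.2⟩)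
    exact (h2.comp s h1).deriv
  -- rewrite the integral
  have hEq : Set.EqOn (fun s => (t - s) ^ (-α) * deriv (fun s => u (s ^ α / c)) s)
      (fun s => (α / c * F (u (s ^ α / c))) * (s ^ (α - 1) * (t - s) ^ (-α)))
      (Set.Ioc 0 t) := by
    intro s hs
    simp only
    rw [hderiv s hs]
    ring
  have hint_eq : (∫ s in (0:ℝ)..t, (t - s) ^ (-α) * deriv (fun s => u (s ^ α / c)) s)
      = ∫ s in (0:ℝ)..t, (α / c * F (u (s ^ α / c))) * (s ^ (α - 1) * (t - s) ^ (-α)) := by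
    rw [intervalIntegral.integral_of_le ht.le, intervalIntegral.integral_of_le ht.le]
    exact MeasureTheory.setIntegral_congr_fun measurableSet_Ioc hEq
  have hB := caputo_betaT_integrable hα hα' ht
  have hvcont : ContinuousOn (fun s : ℝ => α / c * F (u (s ^ α / c))) (Set.uIcc 0 t) := by
    rw [Set.uIcc_of_le ht.le]
    apply ContinuousOn.mul continuousOn_const
    apply hF.continuous.comp_continuousOn
    apply hucont.comp
    · apply ContinuousOn.div_const
      exact fun s hs => (Real.continuousAt_rpow_const s α (Or.inr hα.le)).continuousWithinAt
    · exact hgmem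
  have hf₂ : IntervalIntegrable
      (fun s => (α / c * F (u (s ^ α / c))) * (s ^ (α - 1) * (t - s) ^ (-α))) volume 0 t :=
    hB.continuousOn_mul hvcont
  have hf₃ : IntervalIntegrable
      (fun s => (α / c * F (u (t ^ α / c))) * (s ^ (α - 1) * (t - s) ^ (-α))) volume 0 t :=
    hB.const_mul _
  have hvt0 : 0 ≤ u (t ^ α / c) := hunn _ (hgmem t ⟨ht.le, le_refl t⟩)
  have hmono : (∫ s in (0:ℝ)..t, (α / c * F (u (s ^ α / c))) * (s ^ (α - 1) * (t - s) ^ (-α)))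
      ≤ ∫ s in (0:ℝ)..t, (α / c * F (u (t ^ α / c))) * (s ^ (α - 1) * (t - s) ^ (-α)) := by
    apply intervalIntegral.integral_mono_on ht.le hf₂ hf₃
    intro s hs
    have hBnn : 0 ≤ s ^ (α - 1) * (t - s) ^ (-α) :=
      mul_nonneg (Real.rpow_nonneg hs.1 _) (Real.rpow_nonneg (by linarith [hs.2]) _)
    apply mul_le_mul_of_nonneg_right _ hBnn
    apply mul_le_mul_of_nonneg_left _ (div_nonneg hα.le hc.le)
    have hs' : s ^ α / c ∈ Set.Icc (0:ℝ) T := hgmem s hs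
    have ht' : t ^ α / c ∈ Set.Icc (0:ℝ) T := hgmem t ⟨ht.le, le_refl t⟩
    have hle : s ^ α / c ≤ t ^ α / c := by
      gcongr
      · exact hs.1
      · exact hs.2
    exact hFmono (Set.mem_Ici.mpr (hunn _ hs')) (Set.mem_Ici.mpr (hunn _ ht'))
      (humono hs' ht' hle)
  have hval : (∫ s in (0:ℝ)..t, (α / c * F (u (t ^ α / c))) * (s ^ (α - 1) * (t - s) ^ (-α)))
      = (α / c * F (u (t ^ α / c))) * (Real.Gamma α * Real.Gamma (1 - α)) := by
    rw [intervalIntegral.integral_const_mul, caputo_betaT_value hα hα' ht]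
  rw [leftCaputo, hint_eq]
  calc (1 / Real.Gamma (1 - α)) *
        ∫ s in (0:ℝ)..t, (α / c * F (u (s ^ α / c))) * (s ^ (α - 1) * (t - s) ^ (-α))
      ≤ (1 / Real.Gamma (1 - α)) *
        ((α / c * F (u (t ^ α / c))) * (Real.Gamma α * Real.Gamma (1 - α))) := by
        rw [← hval]
        exact mul_le_mul_of_nonneg_left hmono (by positivity)
    _ = F (u (t ^ α / c)) := by
        rw [hcdef, Real.Gamma_add_one hα.ne']
        field_simp

end
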